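/- arXiv:1802.02469 — 8 statements merged into one kernel-verified Lean document; each statement's English description precedes it below -/
import Mathlib

section
/- For every unitary matrix U in U(2) over the complex numbers, there exist a pure unit quaternion μ and real numbers α and φ such that for all (z₁, z₂) ∈ ℂ², Φ(U·(z₁, z₂)) = exp(μ·α/2) · Φ(z₁, z₂) · exp(j·φ), where U·(z₁, z₂) denotes matrix-vector multiplication and exp is the quaternion exponential. -/
open Quaternion MeasureTheory

noncomputable section

/-- The imaginary unit `i` of the quaternions. -/
def qi : ℍ[ℝ] := ⟨0, 1, 0, 0⟩

/-- The imaginary unit `j` of the quaternions. -/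
def qj : ℍ[ℝ] := ⟨0, 0, 1, 0⟩

/-- The embedding `ι : ℂ → ℍ` sending `a + b·√(−1)` to `a + b·j`. -/
def iotaC (z : ℂ) : ℍ[ℝ] := ⟨z.re, 0, z.im, 0⟩

/-- The identification `Φ : ℂ² → ℍ`, `Φ(z₁, z₂) = ι(z₁) + i·ι(z₂)`. -/
def PhiMap (z : Fin 2 → ℂ) : ℍ[ℝ] := iotaC (z 0) + qi * iotaC (z 1)

/-- A quaternion is a pure unit quaternion if its real part is `0` and its modulus is `1`. -/
def IsPureUnit (μ : ℍ[ℝ]) : Prop := μ.re = 0 ∧ ‖μ‖ = 1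

/-- The quaternion exponential. -/
def qexp (q : ℍ[ℝ]) : ℍ[ℝ] := NormedSpace.exp q

/-- The Euclidean inner product on `ℍ ≅ ℝ⁴`: `⟨p, q⟩` is the real part of `p·q̄`. -/
def qinner (p q : ℍ[ℝ]) : ℝ := (p * star q).re

@[simp] lemma qi_re : qi.re = 0 := rfl
@[simp] lemma qi_imI : qi.imI = 1 := rfl
@[simp] lemma qi_imJ : qi.imJ = 0 := rfl
@[simp] lemma qi_imK : qi.imK = 0 := rfl
@[simp] lemma qj_re : qj.re = 0 := rfl
@[simp] lemma qj_imI : qj.imI = 0 := rfl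
@[simp] lemma qj_imJ : qj.imJ = 1 := rfl
@[simp] lemma qj_imK : qj.imK = 0 := rfl
@[simp] lemma iotaC_re (z : ℂ) : (iotaC z).re = z.re := rfl
@[simp] lemma iotaC_imI (z : ℂ) : (iotaC z).imI = 0 := rfl
@[simp] lemma iotaC_imJ (z : ℂ) : (iotaC z).imJ = z.im := rfl
@[simp] lemma iotaC_imK (z : ℂ) : (iotaC z).imK = 0 := rfl

lemma mul_formula (a b c z₁ z₂ : ℂ) :
    (iotaC a + qi * iotaC b) * (iotaC z₁ + qi * iotaC z₂) * iotaC c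
      = iotaC ((a*z₁ - (starRingEnd ℂ) b * z₂)*c)
        + qi * iotaC (((starRingEnd ℂ) a * z₂ + b * z₁)*c) := by
  ext <;>
    simp [iotaC_re, iotaC_imI, iotaC_imJ, iotaC_imK, qi_re, qi_imI, qi_imJ, qi_imK, Quaternion.re_mul, Quaternion.imI_mul, Quaternion.imJ_mul,
      Quaternion.imK_mul, Complex.mul_re, Complex.mul_im, Complex.sub_re, Complex.sub_im,
      Complex.add_re, Complex.add_im, Complex.conj_re, Complex.conj_im] <;> ring

lemma qexp_pure (μ : ℍ[ℝ]) (hμ : IsPureUnit μ) (t : ℝ) :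
    qexp (μ * ((t : ℝ) : ℍ[ℝ])) = ((Real.cos t : ℝ) : ℍ[ℝ]) + Real.sin t • μ := by
  have h1 : μ * ((t : ℝ) : ℍ[ℝ]) = t • μ := Quaternion.mul_coe_eq_smul t μ
  rcases eq_or_ne t 0 with rfl | ht
  · simp [qexp, h1, NormedSpace.exp_zero]
  · have hre : (t • μ).re = 0 := by simp [Quaternion.re_smul, hμ.1]
    have hnorm : ‖t • μ‖ = |t| := by rw [norm_smul, hμ.2, Real.norm_eq_abs, mul_one]
    rw [qexp, h1, Quaternion.exp_of_re_eq_zero _ hre, hnorm]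
    rcases abs_cases t with ⟨h, _⟩ | ⟨h, _⟩ <;> rw [h]
    · rw [smul_smul, div_mul_cancel₀ _ ht]
    · rw [Real.cos_neg, Real.sin_neg, smul_smul]
      congr 1
      field_simp

lemma exists_exp (p : ℍ[ℝ]) (hp : ‖p‖ = 1) :
    ∃ μ α, IsPureUnit μ ∧ p = qexp (μ * ((α / 2 : ℝ) : ℍ[ℝ])) := by
  have hns : Quaternion.normSq p = 1 := by
    rw [Quaternion.normSq_eq_norm_mul_self, hp, mul_one]
  have hns' : p.re ^ 2 + (p.imI ^ 2 + p.imJ ^ 2 + p.imK ^ 2) = 1 := by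
    have := Quaternion.normSq_def' p
    rw [hns] at this; linarith
  have him : ‖p.im‖ ^ 2 = 1 - p.re ^ 2 := by
    have h2 : Quaternion.normSq p.im = ‖p.im‖ ^ 2 := by
      rw [Quaternion.normSq_eq_norm_mul_self]; ring
    have h3 := Quaternion.normSq_def' p.im
    simp only [Quaternion.re_im, Quaternion.imI_im, Quaternion.imJ_im, Quaternion.imK_im] at h3
    rw [h2] at h3
    nlinarith [hns']
  have hre1 : p.re ≤ 1 := by nlinarith [sq_nonneg p.imI, sq_nonneg p.imJ, sq_nonneg p.imK]
  have hre2 : -1 ≤ p.re := by nlinarith [sq_nonneg p.imI, sq_nonneg p.imJ, sq_nonneg p.imK]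
  set t := Real.arccos p.re with ht
  have hcos : Real.cos t = p.re := Real.cos_arccos hre2 hre1
  have hsin : Real.sin t = ‖p.im‖ := by
    rw [ht, Real.sin_arccos]
    rw [show (1 : ℝ) - p.re ^ 2 = ‖p.im‖ ^ 2 by rw [him]]
    exact Real.sqrt_sq (norm_nonneg _)
  have hqi : IsPureUnit qi := by
    constructor
    · rfl
    · have h4 : Quaternion.normSq qi = 1 := by simp [Quaternion.normSq_def', qi_re, qi_imI, qi_imJ, qi_imK]
      rw [Quaternion.normSq_eq_norm_mul_self] at h4
      nlinarith [norm_nonneg qi]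
  by_cases h0 : p.im = 0
  · refine ⟨qi, 2 * t, hqi, ?_⟩
    rw [show (2 * t) / 2 = t by ring, qexp_pure qi hqi t, hcos, hsin, h0]
    rw [norm_zero, zero_smul, add_zero, ← Quaternion.re_add_im p, h0, add_zero]
    simp
  · refine ⟨‖p.im‖⁻¹ • p.im, 2 * t, ⟨?_, ?_⟩, ?_⟩
    · simp [Quaternion.re_smul]
    · rw [norm_smul, norm_inv, norm_norm, inv_mul_cancel₀ (norm_ne_zero_iff.mpr h0)]
    · rw [show (2 * t) / 2 = t by ring,
        qexp_pure _ ⟨by simp [Quaternion.re_smul], by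
          rw [norm_smul, norm_inv, norm_norm, inv_mul_cancel₀ (norm_ne_zero_iff.mpr h0)]⟩ t,
        hcos, hsin, smul_smul, mul_inv_cancel₀ (norm_ne_zero_iff.mpr h0), one_smul,
        Quaternion.re_add_im]

lemma isPureUnit_qj : IsPureUnit qj := by
  constructor
  · rfl
  · have h4 : Quaternion.normSq qj = 1 := by simp [Quaternion.normSq_def', qj_re, qj_imI, qj_imJ, qj_imK]
    rw [Quaternion.normSq_eq_norm_mul_self] at h4
    nlinarith [norm_nonneg qj]

lemma qexp_qj (φ : ℝ) : qexp (qj * ((φ : ℝ) : ℍ[ℝ])) = iotaC (Complex.exp (φ * Complex.I)) := by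
  rw [qexp_pure qj isPureUnit_qj φ]
  ext <;> simp [iotaC_re, iotaC_imI, iotaC_imJ, iotaC_imK, qj_re, qj_imI, qj_imJ, qj_imK, Quaternion.re_smul, Complex.exp_ofReal_mul_I_re, Complex.exp_ofReal_mul_I_im]

lemma norm_p (a b : ℂ) (h : Complex.normSq a + Complex.normSq b = 1) :
    ‖iotaC a + qi * iotaC b‖ = 1 := by
  have h1 : Quaternion.normSq (iotaC a + qi * iotaC b) = 1 := by
    have e1 : iotaC a + qi * iotaC b = (⟨a.re, b.re, a.im, b.im⟩ : ℍ[ℝ]) := by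
      ext <;> simp [iotaC_re, iotaC_imI, iotaC_imJ, iotaC_imK, qi_re, qi_imI, qi_imJ, qi_imK]
    rw [Quaternion.normSq_def', e1]
    simp [Complex.normSq_apply] at h ⊢
    linarith
  rw [Quaternion.normSq_eq_norm_mul_self] at h1
  nlinarith [norm_nonneg (iotaC a + qi * iotaC b)]

/-- Every `U ∈ U(2)` acts on `ℍ ≅ ℂ²` as `X ↦ exp(μ·α/2)·X·exp(j·φ)` for some
pure unit quaternion `μ` and reals `α`, `φ`. -/
theorem unitary_to_quaternion (U : Matrix (Fin 2) (Fin 2) ℂ)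
    (hU : U ∈ Matrix.unitaryGroup (Fin 2) ℂ) :
    ∃ (μ : ℍ[ℝ]) (α φ : ℝ), IsPureUnit μ ∧
      ∀ z : Fin 2 → ℂ,
        PhiMap (U.mulVec z) =
          qexp (μ * ((α / 2 : ℝ) : ℍ[ℝ])) * PhiMap z * qexp (qj * ((φ : ℝ) : ℍ[ℝ])) := by
  have h1 : star U * U = 1 := hU.1
  set d := U.det with hd
  have hdet : (starRingEnd ℂ) d * d = 1 := by
    have := congrArg Matrix.det h1
    rwa [Matrix.det_mul, Matrix.det_one, Matrix.star_eq_conjTranspose,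
      Matrix.det_conjTranspose] at this
  have hnsd : Complex.normSq d = 1 := by
    have h := Complex.normSq_eq_conj_mul_self (z := d)
    rw [hdet] at h
    exact_mod_cast h
  have habs : ‖d‖ = 1 := by
    rw [← Complex.sq_norm] at hnsd
    nlinarith [norm_nonneg d]
  set φ := d.arg / 2 with hφ
  set c := Complex.exp (φ * Complex.I) with hc
  have hcc : c * c = d := by
    rw [hc, ← Complex.exp_add]
    have : (↑φ * Complex.I + ↑φ * Complex.I) = ↑d.arg * Complex.I := by
      rw [hφ]; push_cast; ring
    rw [this]
    have := Complex.norm_mul_exp_arg_mul_I d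
    rwa [habs, Complex.ofReal_one, one_mul] at this
  have habsc : ‖c‖ = 1 := Complex.norm_exp_ofReal_mul_I φ
  have hcabs : c * (starRingEnd ℂ) c = 1 := by
    rw [Complex.mul_conj, ← Complex.sq_norm, habsc]
    norm_num
  have hadj : U * U.adjugate = d • 1 := by rw [Matrix.mul_adjugate]
  have hstar : d • star U = U.adjugate := by
    calc d • star U = star U * (d • 1) := by rw [Matrix.mul_smul, Matrix.mul_one]
      _ = star U * (U * U.adjugate) := by rw [hadj]
      _ = (star U * U) * U.adjugate := by rw [Matrix.mul_assoc]
      _ = U.adjugate := by rw [h1, Matrix.one_mul]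
  have e11 : d * (starRingEnd ℂ) (U 0 0) = U 1 1 := by
    have := congrFun (congrFun hstar 0) 0
    simpa [Matrix.adjugate_fin_two, Matrix.star_eq_conjTranspose,
      Matrix.conjTranspose_apply] using this
  have e01 : d * (starRingEnd ℂ) (U 1 0) = -U 0 1 := by
    have := congrFun (congrFun hstar 0) 1
    simpa [Matrix.adjugate_fin_two, Matrix.star_eq_conjTranspose,
      Matrix.conjTranspose_apply] using this
  have hcol : (starRingEnd ℂ) (U 0 0) * U 0 0 + (starRingEnd ℂ) (U 1 0) * U 1 0 = 1 := by
    have := congrFun (congrFun h1 0) 0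
    simpa [Matrix.mul_apply, Fin.sum_univ_two, Matrix.star_eq_conjTranspose,
      Matrix.conjTranspose_apply, Matrix.one_apply] using this
  set a := (starRingEnd ℂ) c * U 0 0 with ha
  set b := (starRingEnd ℂ) c * U 1 0 with hb
  have hU00 : U 0 0 = c * a := by rw [ha, ← mul_assoc, hcabs, one_mul]
  have hU10 : U 1 0 = c * b := by rw [hb, ← mul_assoc, hcabs, one_mul]
  have hU11 : U 1 1 = c * (starRingEnd ℂ) a := by
    rw [ha, map_mul, Complex.conj_conj]
    linear_combination (-1 : ℂ) * e11 - (starRingEnd ℂ) (U 0 0) * hcc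
  have hU01 : U 0 1 = -(c * (starRingEnd ℂ) b) := by
    rw [hb, map_mul, Complex.conj_conj]
    linear_combination e01 + (starRingEnd ℂ) (U 1 0) * hcc
  have hab : Complex.normSq a + Complex.normSq b = 1 := by
    have h5 : ((Complex.normSq a + Complex.normSq b : ℝ) : ℂ)
        = (starRingEnd ℂ) a * a + (starRingEnd ℂ) b * b := by
      push_cast [Complex.normSq_eq_conj_mul_self]; ring
    have h6 : (starRingEnd ℂ) a * a + (starRingEnd ℂ) b * b = 1 := by
      rw [ha, hb, map_mul, map_mul, Complex.conj_conj]
      linear_combination (c * (starRingEnd ℂ) c) * hcol + hcabs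
    rw [h6] at h5
    exact_mod_cast h5
  obtain ⟨μ, α, hμ, hpe⟩ := exists_exp (iotaC a + qi * iotaC b) (norm_p a b hab)
  refine ⟨μ, α, φ, hμ, ?_⟩
  intro z
  rw [← hpe, qexp_qj φ]
  show iotaC (U.mulVec z 0) + qi * iotaC (U.mulVec z 1) = _
  have hm0 : U.mulVec z 0 = U 0 0 * z 0 + U 0 1 * z 1 := by
    simp [Matrix.mulVec, dotProduct, Fin.sum_univ_two]
  have hm1 : U.mulVec z 1 = U 1 0 * z 0 + U 1 1 * z 1 := by
    simp [Matrix.mulVec, dotProduct, Fin.sum_univ_two]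
  have A : U.mulVec z 0 = (a * z 0 - (starRingEnd ℂ) b * z 1) * c := by
    rw [hm0, hU00, hU01]; ring
  have B : U.mulVec z 1 = ((starRingEnd ℂ) a * z 1 + b * z 0) * c := by
    rw [hm1, hU10, hU11]; ring
  rw [A, B, ← mul_formula]
  rfl
end
end

section
/- For every Hermitian positive semidefinite 2×2 complex matrix H, there exist a pure unit quaternion μ, a real number K ≥ 0, and a real number η ∈ [0, 1] such that for all (z₁, z₂) ∈ ℂ², Φ(H·(z₁, z₂)) = K·(Φ(z₁, z₂) − η·μ·Φ(z₁, z₂)·j). -/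
open Quaternion MeasureTheory
open scoped ComplexOrder

noncomputable section

/-- Constructor for quaternions from four real components. -/
def mkQ (w x y z : ℝ) : ℍ[ℝ] := ⟨w, x, y, z⟩

/-- Key computational identity: a Hermitian matrix acts on `ℍ ≅ ℂ²` as
`X ↦ K·X + q·X·j` with `K = (a+d)/2` and `q = -b.im·i + ((d-a)/2)·j - b.re·k`. -/
theorem key_identity (H : Matrix (Fin 2) (Fin 2) ℂ) (a d K : ℝ) (b : ℂ)
    (h00 : H 0 0 = (a : ℂ)) (h11 : H 1 1 = (d : ℂ)) (h01 : H 0 1 = b)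
    (h10 : H 1 0 = starRingEnd ℂ b) (hK : K = (a + d)/2) (z : Fin 2 → ℂ) :
    PhiMap (H.mulVec z) =
      (K : ℍ[ℝ]) * PhiMap z + mkQ 0 (-b.im) ((d - a)/2) (-b.re) * PhiMap z * qj := by
  have e0 : H.mulVec z 0 = (a : ℂ) * z 0 + b * z 1 := by
    simp [Matrix.mulVec, dotProduct, Fin.sum_univ_two, h00, h01]
  have e1 : H.mulVec z 1 = starRingEnd ℂ b * z 0 + (d : ℂ) * z 1 := by
    simp [Matrix.mulVec, dotProduct, Fin.sum_univ_two, h10, h11]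
  ext <;>
    simp [PhiMap, e0, e1, h00, h11, h01, h10, Quaternion.re_mul, Quaternion.imI_mul,
      Quaternion.imJ_mul, Quaternion.imK_mul] <;>
    simp [PhiMap, iotaC, qi, qj, mkQ, e0, e1, Quaternion.re_coe, Quaternion.imI_coe,
      Quaternion.imJ_coe, Quaternion.imK_coe,
      Complex.add_re, Complex.add_im, Complex.mul_re, Complex.mul_im] <;>
    (rw [hK]; ring)

set_option maxHeartbeats 1000000 in
/-- Every Hermitian positive semidefinite `H` acts on `ℍ ≅ ℂ²` as
`X ↦ K·(X − η·μ·X·j)` for some pure unit quaternion `μ`, `K ≥ 0` and `η ∈ [0,1]`. -/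
theorem hermitian_to_quaternion (H : Matrix (Fin 2) (Fin 2) ℂ) (hH : H.PosSemidef) :
    ∃ (μ : ℍ[ℝ]) (K η : ℝ), IsPureUnit μ ∧ 0 ≤ K ∧ η ∈ Set.Icc (0 : ℝ) 1 ∧
      ∀ z : Fin 2 → ℂ,
        PhiMap (H.mulVec z) =
          (K : ℍ[ℝ]) * (PhiMap z - (η : ℍ[ℝ]) * (μ * PhiMap z * qj)) := by
  obtain ⟨a, ha_def⟩ : ∃ a : ℝ, a = (H 0 0).re := ⟨_, rfl⟩
  obtain ⟨d, hd_def⟩ : ∃ d : ℝ, d = (H 1 1).re := ⟨_, rfl⟩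
  obtain ⟨b, hb_def⟩ : ∃ b : ℂ, b = H 0 1 := ⟨_, rfl⟩
  have h00 : H 0 0 = (a : ℂ) := by rw [ha_def]; exact (hH.1.coe_re_apply_self 0).symm
  have h11 : H 1 1 = (d : ℂ) := by rw [hd_def]; exact (hH.1.coe_re_apply_self 1).symm
  have h01 : H 0 1 = b := hb_def.symm
  have h10 : H 1 0 = starRingEnd ℂ b := by rw [hb_def]; simpa using (hH.1.apply 1 0).symm
  have ha : 0 ≤ a := by
    have h := hH.dotProduct_mulVec_nonneg (Pi.single 0 1)
    simp [dotProduct, Matrix.mulVec, Fin.sum_univ_two, Pi.single, Complex.le_def,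
      h00] at h
    exact h
  have hd : 0 ≤ d := by
    have h := hH.dotProduct_mulVec_nonneg (Pi.single 1 1)
    simp [dotProduct, Matrix.mulVec, Fin.sum_univ_two, Pi.single, Complex.le_def,
      h11] at h
    exact h
  have hdet : b.re ^ 2 + b.im ^ 2 ≤ a * d := by
    have hdet0 : 0 ≤ H.det := by
      rw [hH.1.det_eq_prod_eigenvalues]
      exact Finset.prod_nonneg fun i _ => Complex.zero_le_real.mpr (hH.eigenvalues_nonneg i)
    rw [Matrix.det_fin_two, Complex.le_def] at hdet0
    obtain ⟨h1, -⟩ := hdet0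
    rw [h00, h11, h10, h01] at h1
    simp [Complex.mul_re, Complex.mul_im] at h1
    nlinarith [h1]
  obtain ⟨K, hK_def⟩ : ∃ K : ℝ, K = (a + d) / 2 := ⟨_, rfl⟩
  have hK0 : 0 ≤ K := by rw [hK_def]; positivity
  obtain ⟨r, hrr⟩ : ∃ r : ℝ, r = Real.sqrt (b.im ^ 2 + ((d - a) / 2) ^ 2 + b.re ^ 2) := ⟨_, rfl⟩
  have hr0 : 0 ≤ r := hrr ▸ Real.sqrt_nonneg _
  have hr2 : r ^ 2 = b.im ^ 2 + ((d - a) / 2) ^ 2 + b.re ^ 2 := by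
    rw [hrr]; exact Real.sq_sqrt (by positivity)
  have hrK : r ≤ K := by
    have h1 : b.im ^ 2 + ((d - a) / 2) ^ 2 + b.re ^ 2 ≤ K ^ 2 := by rw [hK_def]; nlinarith
    calc r = Real.sqrt (b.im ^ 2 + ((d - a) / 2) ^ 2 + b.re ^ 2) := hrr
    _ ≤ Real.sqrt (K ^ 2) := Real.sqrt_le_sqrt h1
    _ = K := Real.sqrt_sq hK0
  by_cases hr : r = 0
  · -- q = 0 : the action is X ↦ K·X
    have hS : b.im ^ 2 + ((d - a) / 2) ^ 2 + b.re ^ 2 = 0 := by rw [← hr2, hr]; ring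
    have hbim : b.im = 0 := by
      have : b.im ^ 2 = 0 := by nlinarith [sq_nonneg b.re, sq_nonneg ((d - a) / 2)]
      exact sq_eq_zero_iff.mp this
    have hbre : b.re = 0 := by
      have : b.re ^ 2 = 0 := by nlinarith [sq_nonneg b.im, sq_nonneg ((d - a) / 2)]
      exact sq_eq_zero_iff.mp this
    have hda : (d - a) / 2 = 0 := by
      have : ((d - a) / 2) ^ 2 = 0 := by nlinarith [sq_nonneg b.im, sq_nonneg b.re]
      exact sq_eq_zero_iff.mp this
    refine ⟨qi, K, 0, ⟨rfl, ?_⟩, hK0, ⟨le_refl 0, zero_le_one⟩, ?_⟩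
    · have h1 : ‖qi‖ * ‖qi‖ = 1 := by
        rw [← Quaternion.normSq_eq_norm_mul_self]
        rw [Quaternion.normSq_def']; simp [qi]
      rcases mul_self_eq_one_iff.mp h1 with h | h
      · exact h
      · nlinarith [norm_nonneg qi]
    · intro z
      rw [key_identity H a d K b h00 h11 h01 h10 hK_def z]
      have hq0 : mkQ 0 (-b.im) ((d - a)/2) (-b.re) = 0 := by
        ext <;> simp [mkQ, hbim, hbre, hda]
      rw [hq0]
      simp
  · -- q ≠ 0 : take μ = -q/r and η = r/K
    have hrpos : 0 < r := lt_of_le_of_ne hr0 (Ne.symm hr)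
    have hKpos : 0 < K := lt_of_lt_of_le hrpos hrK
    have hK' : K ≠ 0 := ne_of_gt hKpos
    obtain ⟨η, hη⟩ : ∃ η : ℝ, η = r / K := ⟨_, rfl⟩
    refine ⟨mkQ 0 (b.im / r) (-((d - a) / 2) / r) (b.re / r), K, η,
      ⟨rfl, ?_⟩, hK0, ⟨by rw [hη]; positivity, by rw [hη]; exact (div_le_one hKpos).mpr hrK⟩, ?_⟩
    · have hns : Quaternion.normSq (mkQ 0 (b.im / r) (-((d - a) / 2) / r) (b.re / r)) = 1 := by
        rw [Quaternion.normSq_def']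
        simp only [mkQ]
        field_simp
        linear_combination (-4) * hr2
      have h1 : ‖mkQ 0 (b.im / r) (-((d - a) / 2) / r) (b.re / r)‖ *
          ‖mkQ 0 (b.im / r) (-((d - a) / 2) / r) (b.re / r)‖ = 1 := by
        rw [← Quaternion.normSq_eq_norm_mul_self, hns]
      rcases mul_self_eq_one_iff.mp h1 with h | h
      · exact h
      · nlinarith [norm_nonneg (mkQ 0 (b.im / r) (-((d - a) / 2) / r) (b.re / r))]
    · intro z
      rw [key_identity H a d K b h00 h11 h01 h10 hK_def z]
      generalize PhiMap z = X
      ext <;>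
        simp [Quaternion.re_mul, Quaternion.imI_mul, Quaternion.imJ_mul, Quaternion.imK_mul] <;>
        simp [qj, mkQ, Quaternion.re_coe, Quaternion.imI_coe, Quaternion.imJ_coe,
          Quaternion.imK_coe] <;>
        (rw [hη]; field_simp; ring)
end
end

section
/- Let X be a quaternion, μ a pure unit quaternion, and α, φ real numbers, and set Y = exp(μ·α/2)·X·exp(j·φ). Then |Y|² + Y·j·Ȳ = exp(μ·α/2)·(|X|² + X·j·X̄)·exp(−μ·α/2); that is, the quaternion spectral density of the output of a unitary filter is the conjugation by exp(μ·α/2) of the quaternion spectral density of the input. -/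
open Quaternion MeasureTheory

noncomputable section

/-- exp of an anti-selfadjoint quaternion is unitary. -/
lemma qexp_mul_star_qexp (p : ℍ[ℝ]) (hp : star p = -p) :
    qexp p * star (qexp p) = 1 := by
  rw [qexp, NormedSpace.star_exp, hp,
    ← NormedSpace.exp_add_of_commute_of_mem_ball (𝕂 := ℝ) ((Commute.refl p).neg_right)
      ((NormedSpace.expSeries_radius_eq_top ℝ ℍ[ℝ]).symm ▸ edist_lt_top _ _)
      ((NormedSpace.expSeries_radius_eq_top ℝ ℍ[ℝ]).symm ▸ edist_lt_top _ _), add_neg_cancel,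
    NormedSpace.exp_zero]

/-- The quaternion spectral density of the output of a unitary filter is the conjugation by
`exp(μ·α/2)` of the quaternion spectral density of the input. -/
theorem unitary_filter_spectral_density (X μ : ℍ[ℝ]) (hμ : IsPureUnit μ) (α φ : ℝ)
    (Y : ℍ[ℝ]) (hY : Y = qexp (μ * ((α / 2 : ℝ) : ℍ[ℝ])) * X * qexp (qj * ((φ : ℝ) : ℍ[ℝ]))) :
    ((Quaternion.normSq Y : ℝ) : ℍ[ℝ]) + Y * qj * star Y =
      qexp (μ * ((α / 2 : ℝ) : ℍ[ℝ]))
        * (((Quaternion.normSq X : ℝ) : ℍ[ℝ]) + X * qj * star X)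
        * qexp (-(μ * ((α / 2 : ℝ) : ℍ[ℝ]))) := by
  obtain ⟨hre, -⟩ := hμ
  set a : ℍ[ℝ] := μ * ((α / 2 : ℝ) : ℍ[ℝ]) with ha
  set b : ℍ[ℝ] := qj * ((φ : ℝ) : ℍ[ℝ]) with hb
  have hsμ : star μ = -μ := by ext <;> simp [hre]
  have hsj : star qj = -qj := by ext <;> simp <;> simp [qj]
  have hsa : star a = -a := by
    rw [ha, star_mul, Quaternion.star_coe, hsμ, mul_neg, Quaternion.coe_commutes]
  have hsb : star b = -b := by
    rw [hb, star_mul, Quaternion.star_coe, hsj, mul_neg, Quaternion.coe_commutes]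
  set E : ℍ[ℝ] := qexp a with hE
  set F : ℍ[ℝ] := qexp b with hF
  have hsE : star E = qexp (-a) := by rw [hE, qexp, NormedSpace.star_exp, hsa, qexp]
  have hFF : F * star F = 1 := qexp_mul_star_qexp b hsb
  have hcomm : Commute qj F := by
    have h : Commute qj b := (Commute.refl qj).mul_right (Quaternion.coe_commute φ qj).symm
    exact h.exp_right
  have hF1 : ∀ z : ℍ[ℝ], F * (star F * z) = z := fun z => by
    rw [← mul_assoc, hFF, one_mul]
  have hFj : ∀ z : ℍ[ℝ], F * (qj * z) = qj * (F * z) := fun z => by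
    rw [← mul_assoc, ← hcomm.eq, mul_assoc]
  subst hY
  rw [← hsE]
  simp only [← Quaternion.self_mul_star, star_mul, mul_add, add_mul, mul_assoc, hFj, hF1]
end
end

section
/- Let X be a quaternion and μ a pure unit quaternion, and set Y = X − μ·X·j (the polarizer with diattenuation axis μ, i.e. the Hermitian filter with polarizing power η = 1 and unit homogeneous gain). Then μ·Y = Y·j and Y·j·Ȳ = |Y|²·μ; that is, the output of a polarizer is fully polarized with polarization axis μ, regardless of the input. -/
open Quaternion MeasureTheory

noncomputable section

/-- The output of a polarizer with diattenuation axis `μ` is fully polarized with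
polarization axis `μ`, regardless of the input. -/
theorem polarizer_fully_polarized (X μ : ℍ[ℝ]) (hμ : IsPureUnit μ)
    (Y : ℍ[ℝ]) (hY : Y = X - μ * X * qj) :
    μ * Y = Y * qj ∧ Y * qj * star Y = ((Quaternion.normSq Y : ℝ) : ℍ[ℝ]) * μ := by
  obtain ⟨hre, hnorm⟩ := hμ
  have hstar : star μ = -μ := Quaternion.star_eq_neg.mpr hre
  have hns : Quaternion.normSq μ = 1 := by
    rw [Quaternion.normSq_eq_norm_mul_self, hnorm, one_mul]
  have hμ2 : μ * μ = -1 := by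
    have h := Quaternion.star_mul_self μ
    rw [hstar, hns, neg_mul] at h
    simpa using neg_eq_iff_eq_neg.mp h
  have hjj : qj * qj = -1 := by
    ext <;> simp only [Quaternion.re_mul, Quaternion.imI_mul, Quaternion.imJ_mul, Quaternion.imK_mul] <;> simp [qj, Quaternion.ext_iff]
  have h1 : μ * Y = Y * qj := by
    subst hY
    rw [mul_sub, sub_mul, mul_assoc (μ * X) qj qj, hjj]
    rw [show μ * (μ * X * qj) = μ * μ * X * qj by noncomm_ring, hμ2]
    noncomm_ring
  refine ⟨h1, ?_⟩
  rw [← h1, mul_assoc, Quaternion.self_mul_star, Quaternion.coe_commutes]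
end
end

section
/- Let (Ω, P) be a probability space and X : Ω → ℍ a random quaternion with E[|X|²] = σ₀² and E[X·j·X̄] = 0 (unpolarized input with variance σ₀²), where all the relevant integrability conditions hold. Let μ be a pure unit quaternion, K and η real numbers, and set Y = K·(X − η·μ·X·j) pointwise. Then E[|Y|²] = σ₀²·K²·(1 + η²) and E[Y·j·Ȳ] = 2·σ₀²·K²·η·μ; equivalently, the quaternion spectral density of the output is σ₀²·K²·(1 + η² + 2·η·μ). -/
open Quaternion MeasureTheory

noncomputable section

def reCLM : ℍ[ℝ] →L[ℝ] ℝ :=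
  LinearMap.toContinuousLinearMap
    { toFun := fun q => q.re
      map_add' := fun _ _ => rfl
      map_smul' := fun _ _ => rfl }

lemma reCLM_apply (q : ℍ[ℝ]) : reCLM q = q.re := rfl

lemma mu_sq (μ : ℍ[ℝ]) (hμ : IsPureUnit μ) : μ * μ = -1 := by
  have hs : star μ = -μ := Quaternion.star_eq_neg.mpr hμ.1
  have h1 : μ * star μ = ((Quaternion.normSq μ : ℝ) : ℍ[ℝ]) := Quaternion.self_mul_star μ
  have h2 : Quaternion.normSq μ = 1 := by
    rw [Quaternion.normSq_eq_norm_mul_self, hμ.2, one_mul]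
  rw [hs, mul_neg, h2] at h1
  simpa [neg_eq_iff_eq_neg] using h1

lemma key1 (x μ : ℍ[ℝ]) (h0 : μ.re = 0) (K η : ℝ) :
    ((K:ℍ[ℝ]) * (x - (η:ℍ[ℝ]) * (μ * x * qj))) * star ((K:ℍ[ℝ]) * (x - (η:ℍ[ℝ]) * (μ * x * qj)))
      = (K^2 * Quaternion.normSq x) • (1:ℍ[ℝ]) - (K^2*η) • (x * qj * star x * μ)
        - (K^2*η) • (μ * (x * qj * star x)) - (K^2*η^2 * Quaternion.normSq x) • (μ * μ) := by
  have q1 : qj.re = 0 := rfl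
  have q2 : qj.imI = 0 := rfl
  have q3 : qj.imJ = 1 := rfl
  have q4 : qj.imK = 0 := rfl
  ext <;> simp [q1, q2, q3, q4, Quaternion.normSq_def', h0] <;> ring

lemma key2 (x μ : ℍ[ℝ]) (h0 : μ.re = 0) (K η : ℝ) :
    ((K:ℍ[ℝ]) * (x - (η:ℍ[ℝ]) * (μ * x * qj))) * qj * star ((K:ℍ[ℝ]) * (x - (η:ℍ[ℝ]) * (μ * x * qj)))
      = (K^2) • (x * qj * star x) + (2*K^2*η * Quaternion.normSq x) • μ
        - (K^2*η^2) • (μ * (x * qj * star x) * μ) := by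
  have q1 : qj.re = 0 := rfl
  have q2 : qj.imI = 0 := rfl
  have q3 : qj.imJ = 1 := rfl
  have q4 : qj.imK = 0 := rfl
  ext <;> simp [q1, q2, q3, q4, Quaternion.normSq_def', h0] <;> ring

/-- The spectral density of the response of a Hermitian filter to unpolarized white noise:
`E[|Y|²] = σ₀²·K²·(1 + η²)` and `E[Y·j·Ȳ] = 2·σ₀²·K²·η·μ`. -/
theorem hermitian_filter_unpolarized_input {Ω : Type*} [MeasurableSpace Ω]
    (P : Measure Ω) [IsProbabilityMeasure P] (X : Ω → ℍ[ℝ]) (σ₀ : ℝ)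
    (hint₁ : Integrable (fun ω => Quaternion.normSq (X ω)) P)
    (hint₂ : ∀ p q : ℍ[ℝ], Integrable (fun ω => p * X ω * q * star (X ω)) P)
    (hX₁ : ∫ ω, Quaternion.normSq (X ω) ∂P = σ₀ ^ 2)
    (hX₂ : ∫ ω, X ω * qj * star (X ω) ∂P = 0)
    (μ : ℍ[ℝ]) (hμ : IsPureUnit μ) (K η : ℝ)
    (Y : Ω → ℍ[ℝ]) (hY : ∀ ω, Y ω = (K : ℍ[ℝ]) * (X ω - (η : ℍ[ℝ]) * (μ * X ω * qj))) :
    (∫ ω, Quaternion.normSq (Y ω) ∂P) = σ₀ ^ 2 * K ^ 2 * (1 + η ^ 2) ∧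
    (∫ ω, Y ω * qj * star (Y ω) ∂P) = ((2 * σ₀ ^ 2 * K ^ 2 * η : ℝ) : ℍ[ℝ]) * μ := by
  have hg : Integrable (fun ω => X ω * qj * star (X ω)) P := by
    simpa using hint₂ 1 qj
  have hgI : ∫ ω, X ω * qj * star (X ω) ∂P = 0 := hX₂
  -- right multiplication by μ
  have hR : ∫ ω, X ω * qj * star (X ω) * μ ∂P = 0 := by
    have h := (ContinuousLinearMap.mulLeftRight ℝ ℍ[ℝ] 1 μ).integral_comp_comm hg
    simpa [ContinuousLinearMap.mulLeftRight_apply, hgI] using h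
  have hL : ∫ ω, μ * (X ω * qj * star (X ω)) ∂P = 0 := by
    have h := (ContinuousLinearMap.mulLeftRight ℝ ℍ[ℝ] μ 1).integral_comp_comm hg
    simpa [ContinuousLinearMap.mulLeftRight_apply, hgI] using h
  have hM : ∫ ω, μ * (X ω * qj * star (X ω)) * μ ∂P = 0 := by
    have h := (ContinuousLinearMap.mulLeftRight ℝ ℍ[ℝ] μ μ).integral_comp_comm hg
    simpa [ContinuousLinearMap.mulLeftRight_apply, hgI] using h
  -- integrability pieces
  have hA : Integrable (fun ω => (K^2 * Quaternion.normSq (X ω)) • (1:ℍ[ℝ])) P :=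
    (hint₁.const_mul _).smul_const 1
  have hB : Integrable (fun ω => (K^2*η) • (X ω * qj * star (X ω) * μ)) P :=
    (hg.mul_const μ).smul (K^2*η)
  have hC : Integrable (fun ω => (K^2*η) • (μ * (X ω * qj * star (X ω)))) P :=
    (hg.const_mul μ).smul (K^2*η)
  have hD : Integrable (fun ω => (K^2*η^2 * Quaternion.normSq (X ω)) • (μ * μ)) P :=
    (hint₁.const_mul _).smul_const _
  have hkey1 : ∀ ω, Y ω * star (Y ω)
      = (K^2 * Quaternion.normSq (X ω)) • (1:ℍ[ℝ]) - (K^2*η) • (X ω * qj * star (X ω) * μ)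
        - (K^2*η) • (μ * (X ω * qj * star (X ω)))
        - (K^2*η^2 * Quaternion.normSq (X ω)) • (μ * μ) := fun ω => by
    rw [hY ω]; exact key1 (X ω) μ hμ.1 K η
  have hYY : Integrable (fun ω => Y ω * star (Y ω)) P := by
    refine (((hA.sub hB).sub hC).sub hD).congr (ae_of_all _ fun ω => ?_)
    exact (hkey1 ω).symm
  have hIYY : ∫ ω, Y ω * star (Y ω) ∂P = ((σ₀^2 * K^2 * (1+η^2) : ℝ)) • (1:ℍ[ℝ]) := by
    simp only [hkey1]
    have hAB : Integrable (fun ω => (K^2 * Quaternion.normSq (X ω)) • (1:ℍ[ℝ])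
        - (K^2*η) • (X ω * qj * star (X ω) * μ)) P := hA.sub hB
    have hABC : Integrable (fun ω => (K^2 * Quaternion.normSq (X ω)) • (1:ℍ[ℝ])
        - (K^2*η) • (X ω * qj * star (X ω) * μ)
        - (K^2*η) • (μ * (X ω * qj * star (X ω)))) P := hAB.sub hC
    rw [integral_sub hABC hD, integral_sub hAB hC,
      integral_sub hA hB, integral_smul, integral_smul, integral_smul_const,
      integral_smul_const, hR, hL, MeasureTheory.integral_const_mul,
      MeasureTheory.integral_const_mul, hX₁, mu_sq μ hμ]
    simp only [smul_zero, sub_zero]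
    module
  constructor
  · have h1 : ∀ ω, Quaternion.normSq (Y ω) = reCLM (Y ω * star (Y ω)) := fun ω => by
      rw [reCLM_apply, Quaternion.self_mul_star]; simp
    simp only [h1]
    rw [reCLM.integral_comp_comm hYY, hIYY]
    simp [reCLM_apply]
  · have hkey2 : ∀ ω, Y ω * qj * star (Y ω)
        = (K^2) • (X ω * qj * star (X ω)) + (2*K^2*η * Quaternion.normSq (X ω)) • μ
          - (K^2*η^2) • (μ * (X ω * qj * star (X ω)) * μ) := fun ω => by
      rw [hY ω]; exact key2 (X ω) μ hμ.1 K η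
    have hE : Integrable (fun ω => (K^2) • (X ω * qj * star (X ω))) P := hg.smul (K^2)
    have hF : Integrable (fun ω => (2*K^2*η * Quaternion.normSq (X ω)) • μ) P :=
      (hint₁.const_mul _).smul_const μ
    have hG : Integrable (fun ω => (K^2*η^2) • (μ * (X ω * qj * star (X ω)) * μ)) P :=
      ((hg.const_mul μ).mul_const μ).smul (K^2*η^2)
    simp only [hkey2]
    have hEF : Integrable (fun ω => (K^2) • (X ω * qj * star (X ω))
        + (2*K^2*η * Quaternion.normSq (X ω)) • μ) P := hE.add hF
    rw [integral_sub hEF hG, integral_add hE hF, integral_smul, integral_smul, integral_smul_const, hgI, hM,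
      MeasureTheory.integral_const_mul, hX₁, Quaternion.coe_mul_eq_smul]
    simp only [smul_zero, zero_add, sub_zero]
    module
end
end

section
/- Let X : ℝ → ℍ satisfy X(−ν) = −i·X(ν)·i for all ν, let μ : ℝ → ℍ take pure unit quaternion values with μ(−ν) = −i·μ(ν)·i for all ν, and let α, φ : ℝ → ℝ satisfy α(−ν) = α(ν) and φ(−ν) = −φ(ν) for all ν. Define Y(ν) = exp(μ(ν)·α(ν)/2)·X(ν)·exp(j·φ(ν)). Then Y(−ν) = −i·Y(ν)·i for all ν; that is, a unitary filter with these symmetry conditions preserves the i-Hermitian symmetry of the spectrum. -/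
open Quaternion MeasureTheory

noncomputable section

lemma qi_sq : qi * qi = -1 := by
  ext <;> simp [Quaternion.re_mul, Quaternion.imI_mul, Quaternion.imJ_mul,
    Quaternion.imK_mul] <;> simp [qi]

lemma qi_qj_qi : qi * qj * qi = qj := by
  ext <;> simp [Quaternion.re_mul, Quaternion.imI_mul, Quaternion.imJ_mul,
    Quaternion.imK_mul] <;> simp [qi, qj]

/-- `i` as a unit of the quaternions. -/
def ui : (ℍ[ℝ])ˣ :=
  ⟨qi, -qi, by rw [mul_neg, qi_sq, neg_neg], by rw [neg_mul, qi_sq, neg_neg]⟩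

lemma ui_inv_coe : (↑ui⁻¹ : ℍ[ℝ]) = -qi := rfl

lemma conj_eq (q : ℍ[ℝ]) : -(qi * q * qi) = ↑ui * q * ↑ui⁻¹ := by
  rw [ui_inv_coe, mul_neg]; rfl

lemma conj_qexp (q : ℍ[ℝ]) : qexp (-(qi * q * qi)) = -(qi * qexp q * qi) := by
  letI : NormedAlgebra ℚ ℍ[ℝ] := NormedAlgebra.restrictScalars ℚ ℝ ℍ[ℝ]
  rw [conj_eq, conj_eq, qexp, qexp, NormedSpace.exp_units_conj]

/-- A unitary filter with the stated symmetry conditions preserves the i-Hermitian symmetry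
of the spectrum. -/
theorem unitary_filter_preserves_symmetry (X μ : ℝ → ℍ[ℝ]) (α φ : ℝ → ℝ)
    (hX : ∀ ν, X (-ν) = -(qi * X ν * qi))
    (hμ : ∀ ν, IsPureUnit (μ ν))
    (hμs : ∀ ν, μ (-ν) = -(qi * μ ν * qi))
    (hα : ∀ ν, α (-ν) = α ν) (hφ : ∀ ν, φ (-ν) = -φ ν)
    (Y : ℝ → ℍ[ℝ])
    (hY : ∀ ν, Y ν = qexp (μ ν * ((α ν / 2 : ℝ) : ℍ[ℝ])) * X ν
      * qexp (qj * ((φ ν : ℝ) : ℍ[ℝ]))) :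
    ∀ ν, Y (-ν) = -(qi * Y ν * qi) := by
  intro ν
  rw [hY, hY, hX, hμs, hα, hφ]
  have h1 : -(qi * μ ν * qi) * ((α ν / 2 : ℝ) : ℍ[ℝ])
      = -(qi * (μ ν * ((α ν / 2 : ℝ) : ℍ[ℝ])) * qi) := by
    rw [neg_mul, mul_assoc, mul_assoc, ← Quaternion.coe_commutes, ← mul_assoc, ← mul_assoc,
      mul_assoc qi]
  have h2 : qj * (((-φ ν : ℝ)) : ℍ[ℝ])
      = -(qi * (qj * ((φ ν : ℝ) : ℍ[ℝ])) * qi) := by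
    rw [Quaternion.coe_neg, mul_neg]
    congr 1
    symm
    rw [← mul_assoc, mul_assoc (qi * qj), Quaternion.coe_commutes, ← mul_assoc, qi_qj_qi]
  have cancel : ∀ z : ℍ[ℝ], qi * (qi * z) = -z := fun z => by
    rw [← mul_assoc, qi_sq, neg_one_mul]
  rw [h1, h2, conj_qexp, conj_qexp]
  simp only [mul_neg, neg_mul, neg_neg, mul_assoc, cancel]
end
end

section
/- Let Y be a quaternion, μ a pure unit quaternion, S₀ > 0, σ² > 0 real, and Φ ∈ [0, 1]; set α = S₀/σ², Φy = α·Φ/(1 + α), and S₀y = S₀ + σ². Then (S₀/((1 − Φy²)·S₀y))·[(Y + Φy·μ·Y·j) − Φ·μ·(Y + Φy·μ·Y·j)·j] = ((α + α²·(1 − Φ²))/(1 + 2α + α²·(1 − Φ²)))·(Y − (Φ/(1 + α·(1 − Φ²)))·μ·Y·j). That is, composing the Hermitian filters P⁻¹yy and Pxx arising in Wiener denoising of a signal with degree of polarization Φ, polarization axis μ and power S₀ observed in unpolarized white noise of variance σ² yields the stated closed-form Hermitian filter. -/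
open Quaternion MeasureTheory

noncomputable section

set_option maxHeartbeats 1000000 in
/-- Closed-form Hermitian filter arising from composing the Hermitian filters `P⁻¹yy`
and `Pxx` in Wiener denoising with unpolarized white noise. -/
theorem wiener_denoising_closed_form (Y μ : ℍ[ℝ]) (hμ : IsPureUnit μ)
    (S₀ σsq : ℝ) (hS₀ : 0 < S₀) (hσ : 0 < σsq)
    (Φ : ℝ) (hΦ : Φ ∈ Set.Icc (0 : ℝ) 1)
    (α Φy S₀y : ℝ) (hα : α = S₀ / σsq) (hΦy : Φy = α * Φ / (1 + α))
    (hS₀y : S₀y = S₀ + σsq) :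
    ((S₀ / ((1 - Φy ^ 2) * S₀y) : ℝ) : ℍ[ℝ]) *
        ((Y + (Φy : ℍ[ℝ]) * (μ * Y * qj))
          - (Φ : ℍ[ℝ]) * (μ * (Y + (Φy : ℍ[ℝ]) * (μ * Y * qj)) * qj)) =
      (((α + α ^ 2 * (1 - Φ ^ 2)) / (1 + 2 * α + α ^ 2 * (1 - Φ ^ 2)) : ℝ) : ℍ[ℝ]) *
        (Y - ((Φ / (1 + α * (1 - Φ ^ 2)) : ℝ) : ℍ[ℝ]) * (μ * Y * qj)) := by
  obtain ⟨hre, hnorm⟩ := hμ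
  have hstar : star μ = -μ := Quaternion.star_eq_neg.2 hre
  have hμ2 : μ * μ = -1 := by
    have h1 : μ * star μ = ((Quaternion.normSq μ : ℝ) : ℍ[ℝ]) := Quaternion.self_mul_star μ
    have h2 : Quaternion.normSq μ = 1 := by
      rw [Quaternion.normSq_eq_norm_mul_self, hnorm]; ring
    rw [hstar, h2, mul_neg] at h1
    push_cast at h1
    exact neg_eq_iff_eq_neg.mp h1
  have hj2 : qj * qj = -1 := by
    ext <;> simp only [Quaternion.re_mul, Quaternion.imI_mul, Quaternion.imJ_mul, Quaternion.imK_mul] <;> simp [qj, Quaternion.ext_iff]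
  have hinner : μ * (μ * Y * qj) * qj = Y := by
    calc μ * (μ * Y * qj) * qj = (μ * μ) * Y * (qj * qj) := by noncomm_ring
    _ = Y := by rw [hμ2, hj2]; noncomm_ring
  simp only [Quaternion.coe_mul_eq_smul]
  rw [mul_add, mul_smul_comm, add_mul, smul_mul_assoc, hinner]
  obtain ⟨hΦ0, hΦ1⟩ := hΦ
  subst hα hΦy hS₀y
  have hσ' : σsq ≠ 0 := hσ.ne'
  have hα0 : (0:ℝ) < S₀ / σsq := by positivity
  have h1α : (0:ℝ) < 1 + S₀ / σsq := by linarith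
  have hΦy0 : (0:ℝ) ≤ S₀ / σsq * Φ / (1 + S₀ / σsq) := by positivity
  have hΦy1 : S₀ / σsq * Φ / (1 + S₀ / σsq) < 1 := by
    rw [div_lt_one h1α]
    nlinarith
  have hd1 : (0:ℝ) < 1 - (S₀ / σsq * Φ / (1 + S₀ / σsq)) ^ 2 := by nlinarith
  have hS₀y0 : (0:ℝ) < S₀ + σsq := by linarith
  have h1Φ : (0:ℝ) ≤ 1 - Φ ^ 2 := by nlinarith
  have hd2 : (0:ℝ) < 1 + 2 * (S₀ / σsq) + (S₀ / σsq) ^ 2 * (1 - Φ ^ 2) := by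
    nlinarith [mul_nonneg (sq_nonneg (S₀ / σsq)) h1Φ]
  have hd3 : (0:ℝ) < 1 + S₀ / σsq * (1 - Φ ^ 2) := by
    nlinarith [mul_nonneg hα0.le h1Φ]
  have hE : (0:ℝ) < σsq ^ 2 + 2 * S₀ * σsq + S₀ ^ 2 * (1 - Φ ^ 2) := by
    nlinarith [mul_nonneg (sq_nonneg S₀) h1Φ]
  have hD : (0:ℝ) < S₀ * σsq ^ 3 * 4 + (S₀ ^ 2 * σsq ^ 2 * 6 - S₀ ^ 2 * σsq ^ 2 * Φ ^ 2) +
      (S₀ ^ 3 * σsq * 4 - S₀ ^ 3 * σsq * Φ ^ 2 * 2) + (S₀ ^ 4 - S₀ ^ 4 * Φ ^ 2) + σsq ^ 4 := by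
    nlinarith [mul_pos (mul_pos hS₀y0 hS₀y0) hE]
  match_scalars
  · simp only [mul_one]
    rw [div_mul_eq_mul_div, div_eq_div_iff (by positivity) hd2.ne']
    field_simp
    ring
  · simp only [mul_one]
    rw [div_mul_eq_mul_div, mul_neg, div_mul_div_comm, ← neg_div,
      div_eq_div_iff (by positivity) (by positivity : (0:ℝ) <
        (1 + 2 * (S₀ / σsq) + (S₀ / σsq) ^ 2 * (1 - Φ ^ 2)) * (1 + S₀ / σsq * (1 - Φ ^ 2))).ne']
    field_simp
    ring
end
end

section
/- Let (Ω, P) be a probability space and X : Ω → ℍ a random quaternion with E[|X|²] = S₀ and E[X·j·X̄] = Φ·S₀·μ, where S₀ ≥ 0, Φ ∈ [0, 1] and μ is a pure unit quaternion, and all the relevant integrability conditions hold. Define Xₐ = (1/2)·(X − μ·X·j) and X_b = (1/2)·(X + μ·X·j) pointwise, so that X = Xₐ + X_b. Then: (1) E[|Xₐ|²] + E[Xₐ·j·X̄ₐ] = (S₀/2)·(1 + Φ)·(1 + μ); (2) E[|X_b|²] + E[X_b·j·X̄_b] = (S₀/2)·(1 − Φ)·(1 − μ); (3) E[Xₐ·X̄_b]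 = 0 and E[Xₐ·j·X̄_b] = 0 (the two components are uncorrelated). That is, the polarizer decomposition with gain K = 1/2 splits the signal into two uncorrelated fully polarized components with orthogonal (antipodal) polarization axes ±μ and spectral densities (S₀/2)(1 ± Φ)(1 ± μ). -/
open Quaternion MeasureTheory

noncomputable section

/- ### Auxiliary lemmas -/

private lemma hjj : qj * qj = (-1 : ℍ[ℝ]) := by
  ext <;> simp only [Quaternion.re_mul, Quaternion.imI_mul, Quaternion.imJ_mul, Quaternion.imK_mul] <;> simp [qj]

private lemma star_qj : star qj = -qj := Quaternion.star_eq_neg.mpr rfl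

private lemma coe_smul_one (r : ℝ) : (r : ℍ[ℝ]) = r • (1 : ℍ[ℝ]) := by
  rw [← Quaternion.coe_one, Quaternion.smul_coe, mul_one]

private lemma rAA {R : Type*} [Ring R] (x y m j : R) (hj : j * j = -1) :
    (x - m * x * j) * (y - j * y * m) =
      1 * (x * y) * 1 - 1 * (x * j * y) * m - m * (x * j * y) * 1 - m * (x * y) * m := by
  have h : (x - m * x * j) * (y - j * y * m) =
      x * y - x * (j * y * m) - m * x * j * y + m * x * (j * j) * (y * m) := by noncomm_ring
  rw [h, hj]; noncomm_ring

private lemma rAJ {R : Type*} [Ring R] (x y m j : R) (hj : j * j = -1) :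
    (x - m * x * j) * j * (y - j * y * m) =
      1 * (x * j * y) * 1 + 1 * (x * y) * m + m * (x * y) * 1 - m * (x * j * y) * m := by
  have h : (x - m * x * j) * j * (y - j * y * m) =
      x * j * y - x * ((j * j) * (y * m)) - m * x * (j * j) * y +
        m * x * ((j * j) * (j * (y * m))) := by noncomm_ring
  rw [h, hj]; noncomm_ring

private lemma rBB {R : Type*} [Ring R] (x y m j : R) (hj : j * j = -1) :
    (x + m * x * j) * (y + j * y * m) =
      1 * (x * y) * 1 + 1 * (x * j * y) * m + m * (x * j * y) * 1 - m * (x * y) * m := by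
  have h : (x + m * x * j) * (y + j * y * m) =
      x * y + x * (j * y * m) + m * x * j * y + m * x * ((j * j) * (y * m)) := by noncomm_ring
  rw [h, hj]; noncomm_ring

private lemma rBJ {R : Type*} [Ring R] (x y m j : R) (hj : j * j = -1) :
    (x + m * x * j) * j * (y + j * y * m) =
      1 * (x * j * y) * 1 - 1 * (x * y) * m - m * (x * y) * 1 - m * (x * j * y) * m := by
  have h : (x + m * x * j) * j * (y + j * y * m) =
      x * j * y + x * ((j * j) * (y * m)) + m * x * (j * j) * y +
        m * x * ((j * j) * (j * (y * m))) := by noncomm_ring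
  rw [h, hj]; noncomm_ring

private lemma rAB {R : Type*} [Ring R] (x y m j : R) (hj : j * j = -1) :
    (x - m * x * j) * (y + j * y * m) =
      1 * (x * y) * 1 + 1 * (x * j * y) * m - m * (x * j * y) * 1 + m * (x * y) * m := by
  have h : (x - m * x * j) * (y + j * y * m) =
      x * y + x * (j * y * m) - m * x * j * y - m * x * ((j * j) * (y * m)) := by noncomm_ring
  rw [h, hj]; noncomm_ring

private lemma rABJ {R : Type*} [Ring R] (x y m j : R) (hj : j * j = -1) :
    (x - m * x * j) * j * (y + j * y * m) =
      1 * (x * j * y) * 1 - 1 * (x * y) * m + m * (x * y) * 1 + m * (x * j * y) * m := by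
  have h : (x - m * x * j) * j * (y + j * y * m) =
      x * j * y + x * ((j * j) * (y * m)) - m * x * (j * j) * y -
        m * x * ((j * j) * (j * (y * m))) := by noncomm_ring
  rw [h, hj]; noncomm_ring

set_option maxHeartbeats 1000000 in
/-- The polarizer decomposition with gain `K = 1/2` splits a signal into two uncorrelated
fully polarized components with antipodal polarization axes `±μ` and spectral densities
`(S₀/2)(1 ± Φ)(1 ± μ)`. -/
theorem polarizer_decomposition {Ω : Type*} [MeasurableSpace Ω]
    (P : Measure Ω) [IsProbabilityMeasure P] (X : Ω → ℍ[ℝ])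
    (S₀ Φ : ℝ) (hS₀ : 0 ≤ S₀) (hΦ : Φ ∈ Set.Icc (0 : ℝ) 1)
    (μ : ℍ[ℝ]) (hμ : IsPureUnit μ)
    (hint₁ : Integrable (fun ω => Quaternion.normSq (X ω)) P)
    (hint₂ : ∀ p q : ℍ[ℝ], Integrable (fun ω => p * X ω * q * star (X ω)) P)
    (hX₁ : ∫ ω, Quaternion.normSq (X ω) ∂P = S₀)
    (hX₂ : ∫ ω, X ω * qj * star (X ω) ∂P = ((Φ * S₀ : ℝ) : ℍ[ℝ]) * μ)
    (Xa Xb : Ω → ℍ[ℝ])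
    (hXa : ∀ ω, Xa ω = ((1 / 2 : ℝ) : ℍ[ℝ]) * (X ω - μ * X ω * qj))
    (hXb : ∀ ω, Xb ω = ((1 / 2 : ℝ) : ℍ[ℝ]) * (X ω + μ * X ω * qj)) :
    (∀ ω, X ω = Xa ω + Xb ω) ∧
    ((↑(∫ ω, Quaternion.normSq (Xa ω) ∂P) + ∫ ω, Xa ω * qj * star (Xa ω) ∂P : ℍ[ℝ]) =
      ((S₀ / 2 * (1 + Φ) : ℝ) : ℍ[ℝ]) * (1 + μ)) ∧
    ((↑(∫ ω, Quaternion.normSq (Xb ω) ∂P) + ∫ ω, Xb ω * qj * star (Xb ω) ∂P : ℍ[ℝ]) =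
      ((S₀ / 2 * (1 - Φ) : ℝ) : ℍ[ℝ]) * (1 - μ)) ∧
    (∫ ω, Xa ω * star (Xb ω) ∂P = 0 ∧ ∫ ω, Xa ω * qj * star (Xb ω) ∂P = 0) := by
  obtain ⟨hre, hnorm⟩ := hμ
  have hstarμ : star μ = -μ := Quaternion.star_eq_neg.mpr hre
  have hnsq : Quaternion.normSq μ = 1 := by
    rw [Quaternion.normSq_eq_norm_mul_self, hnorm, mul_one]
  have hμμ : μ * μ = -1 := by
    have h1 : -(μ * μ) = (1 : ℍ[ℝ]) := by
      rw [← mul_neg, ← hstarμ, Quaternion.self_mul_star, hnsq, Quaternion.coe_one]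
    exact neg_eq_iff_eq_neg.mp h1
  -- integrable base functions
  have ig1 : Integrable (fun ω => X ω * star (X ω)) P := by
    simpa using hint₂ 1 1
  have ig2 : Integrable (fun ω => X ω * qj * star (X ω)) P := by
    simpa using hint₂ 1 qj
  have ib1 : ∀ p q : ℍ[ℝ], Integrable (fun ω => p * (X ω * star (X ω)) * q) P := fun p q => by
    simpa [ContinuousLinearMap.mulLeftRight_apply] using
      (ContinuousLinearMap.mulLeftRight ℝ ℍ[ℝ] p q).integrable_comp ig1
  have ib2 : ∀ p q : ℍ[ℝ], Integrable (fun ω => p * (X ω * qj * star (X ω)) * q) P := fun p q => by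
    simpa [ContinuousLinearMap.mulLeftRight_apply] using
      (ContinuousLinearMap.mulLeftRight ℝ ℍ[ℝ] p q).integrable_comp ig2
  -- coercion through the integral
  have coe_int : ∀ f : Ω → ℝ, ((∫ ω, f ω ∂P : ℝ) : ℍ[ℝ]) = ∫ ω, ((f ω : ℝ) : ℍ[ℝ]) ∂P := by
    intro f
    rw [coe_smul_one, ← integral_smul_const]
    simp only [coe_smul_one]
  -- value of the base integrals
  have hA : ∫ ω, X ω * star (X ω) ∂P = ((S₀ : ℝ) : ℍ[ℝ]) := by
    have : ∫ ω, X ω * star (X ω) ∂P = ∫ ω, ((Quaternion.normSq (X ω) : ℝ) : ℍ[ℝ]) ∂P := by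
      simp only [Quaternion.self_mul_star]
    rw [this, ← coe_int, hX₁]
  have hI1 : ∀ p q : ℍ[ℝ],
      ∫ ω, p * (X ω * star (X ω)) * q ∂P = p * ((S₀ : ℝ) : ℍ[ℝ]) * q := by
    intro p q
    have h := (ContinuousLinearMap.mulLeftRight ℝ ℍ[ℝ] p q).integral_comp_comm ig1
    simp only [ContinuousLinearMap.mulLeftRight_apply] at h
    rw [h, hA]
  have hI2 : ∀ p q : ℍ[ℝ],
      ∫ ω, p * (X ω * qj * star (X ω)) * q ∂P = p * (((Φ * S₀ : ℝ) : ℍ[ℝ]) * μ) * q := by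
    intro p q
    have h := (ContinuousLinearMap.mulLeftRight ℝ ℍ[ℝ] p q).integral_comp_comm ig2
    simp only [ContinuousLinearMap.mulLeftRight_apply] at h
    rw [h, hX₂]
  -- stars of the components
  have hsa : ∀ ω, star (Xa ω) = (1/2 : ℝ) • (star (X ω) - qj * star (X ω) * μ) := by
    intro ω
    rw [hXa ω, Quaternion.coe_mul_eq_smul, Quaternion.star_smul]
    congr 1
    simp [star_sub, star_mul, hstarμ, star_qj, mul_assoc]
  have hsb : ∀ ω, star (Xb ω) = (1/2 : ℝ) • (star (X ω) + qj * star (X ω) * μ) := by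
    intro ω
    rw [hXb ω, Quaternion.coe_mul_eq_smul, Quaternion.star_smul]
    congr 1
    simp [star_add, star_mul, hstarμ, star_qj, mul_assoc]
  -- the six integrals
  have eAA : ∫ ω, Xa ω * star (Xa ω) ∂P = ((S₀ / 2 * (1 + Φ) : ℝ) : ℍ[ℝ]) := by
    have hpt : (fun ω => Xa ω * star (Xa ω)) = fun ω =>
        ((1/2 : ℝ) * (1/2 : ℝ)) • (1 * (X ω * star (X ω)) * 1 -
            1 * (X ω * qj * star (X ω)) * μ -
            μ * (X ω * qj * star (X ω)) * 1 - μ * (X ω * star (X ω)) * μ) := by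
      funext ω
      rw [hsa ω, hXa ω]
      simp only [Quaternion.coe_mul_eq_smul, smul_mul_assoc, mul_smul_comm, smul_smul]
      rw [rAA (X ω) (star (X ω)) μ qj hjj]
    have i1 : Integrable (fun ω => 1 * (X ω * star (X ω)) * 1) P := ib1 1 1
    have i12 : Integrable (fun ω => 1 * (X ω * star (X ω)) * 1 - 1 * (X ω * qj * star (X ω)) * μ) P := i1.sub (ib2 1 μ)
    have i123 : Integrable (fun ω => 1 * (X ω * star (X ω)) * 1 - 1 * (X ω * qj * star (X ω)) * μ - μ * (X ω * qj * star (X ω)) * 1) P :=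
      i12.sub (ib2 μ 1)
    rw [hpt, integral_smul, integral_sub i123 (ib1 μ μ),
      integral_sub i12 (ib2 μ 1), integral_sub i1 (ib2 1 μ)]
    simp only [hI1, hI2]
    simp only [coe_smul_one, smul_mul_assoc, mul_smul_comm, smul_smul, one_mul, mul_one, hμμ, neg_mul, mul_neg, neg_neg, one_smul, smul_neg]
    module
  have eAJ : ∫ ω, Xa ω * qj * star (Xa ω) ∂P = ((S₀ / 2 * (1 + Φ) : ℝ) : ℍ[ℝ]) * μ := by
    have hpt : (fun ω => Xa ω * qj * star (Xa ω)) = fun ω =>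
        ((1/2 : ℝ) * (1/2 : ℝ)) • (1 * (X ω * qj * star (X ω)) * 1 +
            1 * (X ω * star (X ω)) * μ +
            μ * (X ω * star (X ω)) * 1 - μ * (X ω * qj * star (X ω)) * μ) := by
      funext ω
      rw [hsa ω, hXa ω]
      simp only [Quaternion.coe_mul_eq_smul, smul_mul_assoc, mul_smul_comm, smul_smul]
      rw [rAJ (X ω) (star (X ω)) μ qj hjj]
    have i1 : Integrable (fun ω => 1 * (X ω * qj * star (X ω)) * 1) P := ib2 1 1
    have i12 : Integrable (fun ω => 1 * (X ω * qj * star (X ω)) * 1 + 1 * (X ω * star (X ω)) * μ) P := i1.add (ib1 1 μ)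
    have i123 : Integrable (fun ω => 1 * (X ω * qj * star (X ω)) * 1 + 1 * (X ω * star (X ω)) * μ + μ * (X ω * star (X ω)) * 1) P :=
      i12.add (ib1 μ 1)
    rw [hpt, integral_smul, integral_sub i123 (ib2 μ μ),
      integral_add i12 (ib1 μ 1), integral_add i1 (ib1 1 μ)]
    simp only [hI1, hI2]
    simp only [coe_smul_one, smul_mul_assoc, mul_smul_comm, smul_smul, one_mul, mul_one, hμμ, neg_mul, mul_neg, neg_neg, one_smul, smul_neg]
    module
  have eBB : ∫ ω, Xb ω * star (Xb ω) ∂P = ((S₀ / 2 * (1 - Φ) : ℝ) : ℍ[ℝ]) := by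
    have hpt : (fun ω => Xb ω * star (Xb ω)) = fun ω =>
        ((1/2 : ℝ) * (1/2 : ℝ)) • (1 * (X ω * star (X ω)) * 1 +
            1 * (X ω * qj * star (X ω)) * μ +
            μ * (X ω * qj * star (X ω)) * 1 - μ * (X ω * star (X ω)) * μ) := by
      funext ω
      rw [hsb ω, hXb ω]
      simp only [Quaternion.coe_mul_eq_smul, smul_mul_assoc, mul_smul_comm, smul_smul]
      rw [rBB (X ω) (star (X ω)) μ qj hjj]
    have i1 : Integrable (fun ω => 1 * (X ω * star (X ω)) * 1) P := ib1 1 1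
    have i12 : Integrable (fun ω => 1 * (X ω * star (X ω)) * 1 + 1 * (X ω * qj * star (X ω)) * μ) P := i1.add (ib2 1 μ)
    have i123 : Integrable (fun ω => 1 * (X ω * star (X ω)) * 1 + 1 * (X ω * qj * star (X ω)) * μ + μ * (X ω * qj * star (X ω)) * 1) P :=
      i12.add (ib2 μ 1)
    rw [hpt, integral_smul, integral_sub i123 (ib1 μ μ),
      integral_add i12 (ib2 μ 1), integral_add i1 (ib2 1 μ)]
    simp only [hI1, hI2]
    simp only [coe_smul_one, smul_mul_assoc, mul_smul_comm, smul_smul, one_mul, mul_one, hμμ, neg_mul, mul_neg, neg_neg, one_smul, smul_neg]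
    module
  have eBJ : ∫ ω, Xb ω * qj * star (Xb ω) ∂P = -(((S₀ / 2 * (1 - Φ) : ℝ) : ℍ[ℝ]) * μ) := by
    have hpt : (fun ω => Xb ω * qj * star (Xb ω)) = fun ω =>
        ((1/2 : ℝ) * (1/2 : ℝ)) • (1 * (X ω * qj * star (X ω)) * 1 -
            1 * (X ω * star (X ω)) * μ -
            μ * (X ω * star (X ω)) * 1 - μ * (X ω * qj * star (X ω)) * μ) := by
      funext ω
      rw [hsb ω, hXb ω]
      simp only [Quaternion.coe_mul_eq_smul, smul_mul_assoc, mul_smul_comm, smul_smul]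
      rw [rBJ (X ω) (star (X ω)) μ qj hjj]
    have i1 : Integrable (fun ω => 1 * (X ω * qj * star (X ω)) * 1) P := ib2 1 1
    have i12 : Integrable (fun ω => 1 * (X ω * qj * star (X ω)) * 1 - 1 * (X ω * star (X ω)) * μ) P := i1.sub (ib1 1 μ)
    have i123 : Integrable (fun ω => 1 * (X ω * qj * star (X ω)) * 1 - 1 * (X ω * star (X ω)) * μ - μ * (X ω * star (X ω)) * 1) P :=
      i12.sub (ib1 μ 1)
    rw [hpt, integral_smul, integral_sub i123 (ib2 μ μ),
      integral_sub i12 (ib1 μ 1), integral_sub i1 (ib1 1 μ)]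
    simp only [hI1, hI2]
    simp only [coe_smul_one, smul_mul_assoc, mul_smul_comm, smul_smul, one_mul, mul_one, hμμ, neg_mul, mul_neg, neg_neg, one_smul, smul_neg]
    module
  have eAB : ∫ ω, Xa ω * star (Xb ω) ∂P = 0 := by
    have hpt : (fun ω => Xa ω * star (Xb ω)) = fun ω =>
        ((1/2 : ℝ) * (1/2 : ℝ)) • (1 * (X ω * star (X ω)) * 1 +
            1 * (X ω * qj * star (X ω)) * μ -
            μ * (X ω * qj * star (X ω)) * 1 + μ * (X ω * star (X ω)) * μ) := by
      funext ω
      rw [hsb ω, hXa ω]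
      simp only [Quaternion.coe_mul_eq_smul, smul_mul_assoc, mul_smul_comm, smul_smul]
      rw [rAB (X ω) (star (X ω)) μ qj hjj]
    have i1 : Integrable (fun ω => 1 * (X ω * star (X ω)) * 1) P := ib1 1 1
    have i12 : Integrable (fun ω => 1 * (X ω * star (X ω)) * 1 + 1 * (X ω * qj * star (X ω)) * μ) P := i1.add (ib2 1 μ)
    have i123 : Integrable (fun ω => 1 * (X ω * star (X ω)) * 1 + 1 * (X ω * qj * star (X ω)) * μ - μ * (X ω * qj * star (X ω)) * 1) P :=
      i12.sub (ib2 μ 1)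
    rw [hpt, integral_smul, integral_add i123 (ib1 μ μ),
      integral_sub i12 (ib2 μ 1), integral_add i1 (ib2 1 μ)]
    simp only [hI1, hI2]
    simp only [coe_smul_one, smul_mul_assoc, mul_smul_comm, smul_smul, one_mul, mul_one, hμμ, neg_mul, mul_neg, neg_neg, one_smul, smul_neg]
    module
  have eABJ : ∫ ω, Xa ω * qj * star (Xb ω) ∂P = 0 := by
    have hpt : (fun ω => Xa ω * qj * star (Xb ω)) = fun ω =>
        ((1/2 : ℝ) * (1/2 : ℝ)) • (1 * (X ω * qj * star (X ω)) * 1 -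
            1 * (X ω * star (X ω)) * μ +
            μ * (X ω * star (X ω)) * 1 + μ * (X ω * qj * star (X ω)) * μ) := by
      funext ω
      rw [hsb ω, hXa ω]
      simp only [Quaternion.coe_mul_eq_smul, smul_mul_assoc, mul_smul_comm, smul_smul]
      rw [rABJ (X ω) (star (X ω)) μ qj hjj]
    have i1 : Integrable (fun ω => 1 * (X ω * qj * star (X ω)) * 1) P := ib2 1 1
    have i12 : Integrable (fun ω => 1 * (X ω * qj * star (X ω)) * 1 - 1 * (X ω * star (X ω)) * μ) P := i1.sub (ib1 1 μ)
    have i123 : Integrable (fun ω => 1 * (X ω * qj * star (X ω)) * 1 - 1 * (X ω * star (X ω)) * μ + μ * (X ω * star (X ω)) * 1) P :=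
      i12.add (ib1 μ 1)
    rw [hpt, integral_smul, integral_add i123 (ib2 μ μ),
      integral_add i12 (ib1 μ 1), integral_sub i1 (ib1 1 μ)]
    simp only [hI1, hI2]
    simp only [coe_smul_one, smul_mul_assoc, mul_smul_comm, smul_smul, one_mul, mul_one, hμμ, neg_mul, mul_neg, neg_neg, one_smul, smul_neg]
    module
  refine ⟨?_, ?_, ?_, eAB, eABJ⟩
  · intro ω
    rw [hXa ω, hXb ω]
    simp only [Quaternion.coe_mul_eq_smul]
    module
  · have hcoe : (↑(∫ ω, Quaternion.normSq (Xa ω) ∂P) : ℍ[ℝ]) =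
        ∫ ω, Xa ω * star (Xa ω) ∂P := by
      rw [coe_int]
      simp only [← Quaternion.self_mul_star]
    rw [hcoe, eAA, eAJ]
    noncomm_ring
  · have hcoe : (↑(∫ ω, Quaternion.normSq (Xb ω) ∂P) : ℍ[ℝ]) =
        ∫ ω, Xb ω * star (Xb ω) ∂P := by
      rw [coe_int]
      simp only [← Quaternion.self_mul_star]
    rw [hcoe, eBB, eBJ]
    noncomm_ring
end
end
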